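/- If a univariate real polynomial p with at most 2k+1 monomials, of degree d, is non-negative on the interval [0,1], then p = Σ_i g_i(t)^2 p_i(t) + (1-t) Σ_j h_j(t)^2 q_j(t), where g_i, h_j are polynomials of degree ≤ k, each p_i and q_j has only non-negative coefficients, and every summand has degree ≤ d. -/

import Mathlib

open Polynomial Set Filter

namespace SparseCert

/-- An alternating sign chain of length `n` in the coefficients of `p`. -/
def Alt (p : ℝ[X]) (n : ℕ) : Prop :=
  ∃ e : ℕ → ℕ, (∀ i < n, e i < e (i+1)) ∧ (∀ i ≤ n, p.coeff (e i) ≠ 0) ∧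
    (∀ i < n, p.coeff (e (i+1)) * p.coeff (e i) < 0)

lemma alt_zero {p : ℝ[X]} (hp : p ≠ 0) : Alt p 0 :=
  ⟨fun _ => p.natTrailingDegree, by omega, fun i _ => coeff_natTrailingDegree_ne_zero.mpr hp,
    by omega⟩

lemma chain_strictMono {e : ℕ → ℕ} {n : ℕ} (he : ∀ i < n, e i < e (i+1)) :
    ∀ i j, i < j → j ≤ n → e i < e j := by
  intro i j hij hjn
  induction j with
  | zero => omega
  | succ m ih =>
    rcases Nat.lt_or_ge i m with h | h
    · exact lt_trans (ih h (by omega)) (he m (by omega))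
    · have : i = m := by omega
      subst this
      exact he i (by omega)

lemma Alt.mono {p : ℝ[X]} {n m : ℕ} (h : Alt p n) (hmn : m ≤ n) : Alt p m := by
  obtain ⟨e, h1, h2, h3⟩ := h
  exact ⟨e, fun i hi => h1 i (by omega), fun i hi => h2 i (by omega),
    fun i hi => h3 i (by omega)⟩

lemma Alt.card_le {p : ℝ[X]} {n : ℕ} (h : Alt p n) : n + 1 ≤ p.support.card := by
  obtain ⟨e, h1, h2, _⟩ := h
  have : (Finset.range (n+1)).card ≤ p.support.card := by
    apply Finset.card_le_card_of_injOn e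
    · intro i hi
      simp only [Finset.coe_range, Set.mem_Iio] at hi
      exact mem_support_iff.mpr (h2 i (by omega))
    · intro i hi j hj hij
      simp only [Finset.coe_range, Set.mem_Iio] at hi hj
      by_contra hne
      rcases Nat.lt_or_ge i j with h' | h'
      · exact absurd hij (Nat.ne_of_lt (chain_strictMono h1 i j h' (by omega)))
      · exact absurd hij.symm (Nat.ne_of_lt (chain_strictMono h1 j i (by omega) (by omega)))
  simpa using this

lemma alt_congr_signs {p q : ℝ[X]}
    (h : ∀ i, (0 < p.coeff i ↔ 0 < q.coeff i) ∧ (p.coeff i < 0 ↔ q.coeff i < 0)) {n : ℕ} :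
    Alt p n → Alt q n := by
  rintro ⟨e, h1, h2, h3⟩
  refine ⟨e, h1, fun i hi => ?_, fun i hi => ?_⟩
  · rcases lt_or_gt_of_ne (h2 i hi) with hc | hc
    · exact ne_of_lt ((h (e i)).2.mp hc)
    · exact ne_of_gt ((h (e i)).1.mp hc)
  · have := h3 i hi
    rcases mul_neg_iff.mp this with ⟨ha, hb⟩ | ⟨ha, hb⟩
    · exact mul_neg_iff.mpr (Or.inl ⟨(h _).1.mp ha, (h _).2.mp hb⟩)
    · exact mul_neg_iff.mpr (Or.inr ⟨(h _).2.mp ha, (h _).1.mp hb⟩)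

lemma alt_neg {p : ℝ[X]} {n : ℕ} (h : Alt p n) : Alt (-p) n := by
  obtain ⟨e, h1, h2, h3⟩ := h
  refine ⟨e, h1, fun i hi => by simpa using h2 i hi, fun i hi => ?_⟩
  simp only [coeff_neg]
  nlinarith [h3 i hi]

lemma alt_X_pow_mul {p : ℝ[X]} {a n : ℕ} (h : Alt (X ^ a * p) n) : Alt p n := by
  obtain ⟨e, h1, h2, h3⟩ := h
  have key : ∀ i ≤ n, a ≤ e i ∧ (X ^ a * p).coeff (e i) = p.coeff (e i - a) := by
    intro i hi
    have hne := h2 i hi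
    rw [mul_comm, coeff_mul_X_pow'] at hne ⊢
    by_cases hle : a ≤ e i
    · simp [hle]
    · simp [hle] at hne
  refine ⟨fun i => e i - a, fun i hi => ?_, fun i hi => ?_, fun i hi => ?_⟩
  · have k1 := (key i (by omega)).1
    have k2 := (key (i+1) (by omega)).1
    have := h1 i hi
    show e i - a < e (i+1) - a
    omega
  · have := h2 i hi
    show p.coeff (e i - a) ≠ 0
    rwa [(key i hi).2] at this
  · have := h3 i hi
    show p.coeff (e (i+1) - a) * p.coeff (e i - a) < 0
    rwa [(key (i+1) (by omega)).2, (key i (by omega)).2] at this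

lemma sign_mul_neg {a b x y : ℝ} (h1 : 0 < a * x) (h2 : 0 < b * y) (h3 : x * y < 0) :
    a * b < 0 := by
  by_contra hcon
  push_neg at hcon
  have h4 : 0 < (a*x)*(b*y) := mul_pos h1 h2
  have h5 : (a*b)*(x*y) ≤ 0 := mul_nonpos_of_nonneg_of_nonpos hcon (le_of_lt h3)
  nlinarith

lemma coeff_X_sub_C_mul_succ (p : ℝ[X]) (r : ℝ) (n : ℕ) :
    ((X - C r) * p).coeff (n+1) = p.coeff n - r * p.coeff (n+1) := by
  rw [sub_mul, coeff_sub, coeff_X_mul, coeff_C_mul]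

lemma coeff_X_sub_C_mul_zero (p : ℝ[X]) (r : ℝ) :
    ((X - C r) * p).coeff 0 = - (r * p.coeff 0) := by
  rw [mul_coeff_zero]
  simp

/-- Key Descartes-type lemma: multiplying by `X - C r` with `r > 0` increases the
alternating chain length by at least one. -/
lemma alt_mul_X_sub_C {p : ℝ[X]} (hp : p ≠ 0) {r : ℝ} (hr : 0 < r) {n : ℕ}
    (h : Alt p n) : Alt ((X - C r) * p) (n+1) := by
  classical
  obtain ⟨e₀, he1, he2, he3⟩ := h
  have htc : p.coeff p.natTrailingDegree ≠ 0 := coeff_natTrailingDegree_ne_zero.mpr hp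
  have hle0 : p.natTrailingDegree ≤ e₀ 0 := natTrailingDegree_le_of_ne_zero (he2 0 (by omega))
  -- build chain `e` of length `m ≥ n` with `e 0 = natTrailingDegree p`
  obtain ⟨m, hmn, e, he0, h1, h2, h3⟩ :
      ∃ m, n ≤ m ∧ ∃ e : ℕ → ℕ, e 0 = p.natTrailingDegree ∧
        (∀ i < m, e i < e (i+1)) ∧ (∀ i ≤ m, p.coeff (e i) ≠ 0) ∧
        (∀ i < m, p.coeff (e (i+1)) * p.coeff (e i) < 0) := by
    rcases lt_trichotomy (p.coeff (e₀ 0) * p.coeff p.natTrailingDegree) 0 with hs | hs | hs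
    · -- opposite signs: prepend the trailing degree
      refine ⟨n+1, by omega,
        fun i => match i with | 0 => p.natTrailingDegree | (j+1) => e₀ j,
        rfl, fun i hi => ?_, fun i hi => ?_, fun i hi => ?_⟩
      · match i with
        | 0 =>
          show p.natTrailingDegree < e₀ 0
          have hne : p.natTrailingDegree ≠ e₀ 0 := by
            intro hcontra
            rw [← hcontra] at hs
            nlinarith [mul_self_nonneg (p.coeff p.natTrailingDegree)]
          omega
        | (j+1) => exact he1 j (by omega)
      · match i with
        | 0 => exact htc
        | (j+1) => exact he2 j (by omega)
      · match i with
        | 0 => exact hs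
        | (j+1) => exact he3 j (by omega)
    · exact absurd hs (mul_ne_zero (he2 0 (by omega)) htc)
    · -- same sign: replace the first element by the trailing degree
      refine ⟨n, le_refl n,
        fun i => match i with | 0 => p.natTrailingDegree | (j+1) => e₀ (j+1),
        rfl, fun i hi => ?_, fun i hi => ?_, fun i hi => ?_⟩
      · match i with
        | 0 =>
          show p.natTrailingDegree < e₀ (0+1)
          have := he1 0 (by omega)
          omega
        | (j+1) => exact he1 (j+1) hi
      · match i with
        | 0 => exact htc
        | (j+1) => exact he2 (j+1) hi
      · match i with
        | 0 =>
          show p.coeff (e₀ 1) * p.coeff p.natTrailingDegree < 0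
          have hne : p.coeff (e₀ 1) * p.coeff (e₀ 0) < 0 := he3 0 (by omega)
          exact sign_mul_neg (mul_self_pos.mpr (by intro hz; rw [hz] at hne; simp at hne))
            (by rw [mul_comm] at hs; exact hs) hne
        | (j+1) => exact he3 (j+1) hi
  -- now the main construction
  set g : ℝ[X] := (X - C r) * p with hg
  have main : ∀ t, ∃ v, t ≤ m → (e t ≤ v ∧ 0 < p.coeff v * p.coeff (e t) ∧
      p.coeff (v + 1) * p.coeff (e t) ≤ 0 ∧ (t < m → v < e (t+1))) := by
    intro t
    by_cases ht : t ≤ m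
    swap
    · exact ⟨0, fun h => absurd h ht⟩
    classical
    set Q : ℕ → Prop := fun i => e t ≤ i ∧ 0 < p.coeff i * p.coeff (e t) with hQ
    set B : ℕ := if t < m then e (t+1) - 1 else p.natDegree with hBdef
    have hQet : Q (e t) := ⟨le_refl _, mul_self_pos.mpr (h2 t ht)⟩
    have heB : e t ≤ B := by
      by_cases htm : t < m
      · have := h1 t htm
        simp only [hBdef, if_pos htm]
        omega
      · have htm' : t = m := by omega
        simp only [hBdef, if_neg htm]
        exact le_natDegree_of_ne_zero (h2 t ht)
    set v : ℕ := Nat.findGreatest Q B with hvdef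
    have hvQ : Q v := Nat.findGreatest_spec heB hQet
    have hve : e t ≤ v := hvQ.1
    have hvB : v ≤ B := Nat.findGreatest_le _
    have hnext : p.coeff (v + 1) * p.coeff (e t) ≤ 0 := by
      by_cases hcase : v + 1 ≤ B
      · have hng : ¬ Q (v + 1) := Nat.findGreatest_is_greatest (Nat.lt_succ_self v) hcase
        by_contra hcon
        push_neg at hcon
        exact hng ⟨by omega, hcon⟩
      · by_cases htm : t < m
        · have hB' : B = e (t+1) - 1 := by simp only [hBdef, if_pos htm]
          have h1' := h1 t htm
          have : v + 1 = e (t+1) := by omega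
          rw [this]
          exact le_of_lt (h3 t htm)
        · have hB' : B = p.natDegree := by simp only [hBdef, if_neg htm]
          have hlt : p.natDegree < v + 1 := by omega
          rw [coeff_eq_zero_of_natDegree_lt hlt, zero_mul]
    refine ⟨v, fun _ => ⟨hve, hvQ.2, hnext, fun htm => ?_⟩⟩
    have hB' : B = e (t+1) - 1 := by simp only [hBdef, if_pos htm]
    have h1' := h1 t htm
    omega
  choose u hu using main
  have hue : ∀ t, t ≤ m → e t ≤ u t := fun t ht => (hu t ht).1
  have huP : ∀ t, t ≤ m → 0 < p.coeff (u t) * p.coeff (e t) := fun t ht => (hu t ht).2.1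
  have hnext : ∀ t, t ≤ m → p.coeff (u t + 1) * p.coeff (e t) ≤ 0 :=
    fun t ht => (hu t ht).2.2.1
  have hult : ∀ t, t < m → u t < e (t+1) := fun t ht => (hu t (by omega)).2.2.2 ht
  have hgnext : ∀ t, t ≤ m → 0 < g.coeff (u t + 1) * p.coeff (e t) := by
    intro t ht
    rw [hg, coeff_X_sub_C_mul_succ]
    have := huP t ht
    have := hnext t ht
    nlinarith
  have hgtd : g.coeff (e 0) = - (r * p.coeff (e 0)) := by
    rw [he0]
    rcases Nat.eq_zero_or_pos p.natTrailingDegree with h0 | h0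
    · rw [h0, hg, coeff_X_sub_C_mul_zero]
    · obtain ⟨w, hw⟩ : ∃ w, p.natTrailingDegree = w + 1 := ⟨p.natTrailingDegree - 1, by omega⟩
      rw [hw, hg, coeff_X_sub_C_mul_succ,
        coeff_eq_zero_of_lt_natTrailingDegree (by omega : w < p.natTrailingDegree)]
      ring
  have hgtd_sign : g.coeff (e 0) * p.coeff (e 0) < 0 := by
    rw [hgtd]
    have : 0 < p.coeff (e 0) * p.coeff (e 0) := mul_self_pos.mpr (h2 0 (by omega))
    nlinarith
  refine Alt.mono (n := m+1) ?_ (by omega)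
  refine ⟨fun i => match i with | 0 => e 0 | (j+1) => u j + 1, fun i hi => ?_, fun i hi => ?_,
    fun i hi => ?_⟩
  · match i with
    | 0 =>
      show e 0 < u 0 + 1
      have := hue 0 (by omega)
      omega
    | (j+1) =>
      show u j + 1 < u (j+1) + 1
      have hq1 : u j < e (j+1) := hult j (by omega)
      have hq3 : e (j+1) ≤ u (j+1) := hue (j+1) (by omega)
      omega
  · match i with
    | 0 =>
      show g.coeff (e 0) ≠ 0
      intro hz
      rw [hz, zero_mul] at hgtd_sign
      exact absurd hgtd_sign (lt_irrefl 0)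
    | (j+1) =>
      show g.coeff (u j + 1) ≠ 0
      have := hgnext j (by omega)
      intro hz
      rw [hz, zero_mul] at this
      exact absurd this (lt_irrefl 0)
  · match i with
    | 0 =>
      show g.coeff (u 0 + 1) * g.coeff (e 0) < 0
      have hA := hgnext 0 (by omega)
      have hsq : 0 < p.coeff (e 0) * p.coeff (e 0) := mul_self_pos.mpr (h2 0 (by omega))
      exact sign_mul_neg hA (mul_self_pos.mpr (by
        intro hz
        rw [hz, zero_mul] at hgtd_sign
        exact absurd hgtd_sign (lt_irrefl 0)))
        (by rw [mul_comm] at hgtd_sign; exact hgtd_sign)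
    | (j+1) =>
      show g.coeff (u (j+1) + 1) * g.coeff (u j + 1) < 0
      have hA := hgnext j (by omega)
      have hB2 := hgnext (j+1) (by omega)
      have hC : p.coeff (e (j+1)) * p.coeff (e j) < 0 := h3 j (by omega)
      exact sign_mul_neg hB2 hA hC

/-! ### The certificate cone -/

/-- List-based certificate: `p = Σ g²·pp + (1-X)·Σ h²·q` with degree constraints. -/
def CertL (p : ℝ[X]) (kg kh d : ℕ) : Prop :=
  ∃ A B : List (ℝ[X] × ℝ[X]),
    (∀ x ∈ A, x.1.natDegree ≤ kg ∧ (∀ c, 0 ≤ x.2.coeff c) ∧ (x.1^2 * x.2).natDegree ≤ d) ∧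
    (∀ x ∈ B, x.1.natDegree ≤ kh ∧ (∀ c, 0 ≤ x.2.coeff c) ∧
      ((1 - X) * (x.1^2 * x.2)).natDegree ≤ d) ∧
    p = (A.map fun x => x.1^2 * x.2).sum + (1 - X) * (B.map fun x => x.1^2 * x.2).sum

lemma natDegree_one_sub_X : (1 - X : ℝ[X]).natDegree = 1 := by
  have : (1 - X : ℝ[X]) = -(X - C 1) := by simp [neg_sub]
  rw [this, natDegree_neg, natDegree_X_sub_C]

lemma CertL.mono {p : ℝ[X]} {kg kh d kg' kh' d' : ℕ} (h : CertL p kg kh d)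
    (h1 : kg ≤ kg') (h2 : kh ≤ kh') (h3 : d ≤ d') : CertL p kg' kh' d' := by
  obtain ⟨A, B, hA, hB, hsum⟩ := h
  exact ⟨A, B, fun x hx => ⟨le_trans (hA x hx).1 h1, (hA x hx).2.1, le_trans (hA x hx).2.2 h3⟩,
    fun x hx => ⟨le_trans (hB x hx).1 h2, (hB x hx).2.1, le_trans (hB x hx).2.2 h3⟩, hsum⟩

lemma CertL.zero {kg kh d : ℕ} : CertL 0 kg kh d :=
  ⟨[], [], by simp, by simp, by simp⟩

lemma CertL.of_nonneg_coeffs {p : ℝ[X]} {kg kh d : ℕ} (h : ∀ c, 0 ≤ p.coeff c)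
    (hd : p.natDegree ≤ d) : CertL p kg kh d := by
  refine ⟨[(1, p)], [], ?_, by simp, by simp⟩
  intro x hx
  simp only [List.mem_singleton] at hx
  subst hx
  refine ⟨by simp, h, ?_⟩
  simpa using hd

lemma CertL.single_sq {g pp : ℝ[X]} {kg kh d : ℕ} (hg : g.natDegree ≤ kg)
    (hpp : ∀ c, 0 ≤ pp.coeff c) (hd : (g^2 * pp).natDegree ≤ d) : CertL (g^2 * pp) kg kh d := by
  refine ⟨[(g, pp)], [], ?_, by simp, by simp⟩
  intro x hx
  simp only [List.mem_singleton] at hx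
  subst hx
  exact ⟨hg, hpp, hd⟩

lemma CertL.one_sub_X_mul {r : ℝ[X]} {kg kh d : ℕ} (h : ∀ c, 0 ≤ r.coeff c)
    (hh : (0:ℝ[X]).natDegree ≤ kh) (hd : r.natDegree ≤ d) : CertL ((1-X) * r) kg kh (d+1) := by
  refine ⟨[], [(1, r)], by simp, ?_, by simp⟩
  intro x hx
  simp only [List.mem_singleton] at hx
  subst hx
  refine ⟨by simp, h, ?_⟩
  calc ((1 - X : ℝ[X]) * (1^2 * r)).natDegree ≤ (1-X : ℝ[X]).natDegree + (1^2*r).natDegree :=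
        natDegree_mul_le
  _ ≤ 1 + d := by
      rw [natDegree_one_sub_X]
      simp only [one_pow, one_mul]
      omega
  _ = d + 1 := by omega

lemma CertL.add {p q : ℝ[X]} {kg kh d : ℕ} (hp : CertL p kg kh d) (hq : CertL q kg kh d) :
    CertL (p + q) kg kh d := by
  obtain ⟨A, B, hA, hB, hsum⟩ := hp
  obtain ⟨A', B', hA', hB', hsum'⟩ := hq
  refine ⟨A ++ A', B ++ B', ?_, ?_, ?_⟩
  · intro x hx
    rcases List.mem_append.mp hx with h | h
    · exact hA x h
    · exact hA' x h
  · intro x hx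
    rcases List.mem_append.mp hx with h | h
    · exact hB x h
    · exact hB' x h
  · rw [List.map_append, List.map_append, List.sum_append, List.sum_append, hsum, hsum']
    ring

lemma map_sq_mul {c : ℝ[X]} (A : List (ℝ[X] × ℝ[X])) :
    (A.map fun x => (c * x.1)^2 * x.2).sum = c^2 * (A.map fun x => x.1^2 * x.2).sum := by
  induction A with
  | nil => simp
  | cons a t ih =>
    simp only [List.map_cons, List.sum_cons, ih]
    ring

lemma map_snd_mul {c : ℝ[X]} (A : List (ℝ[X] × ℝ[X])) :
    (A.map fun x => x.1^2 * (c * x.2)).sum = c * (A.map fun x => x.1^2 * x.2).sum := by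
  induction A with
  | nil => simp
  | cons a t ih =>
    simp only [List.map_cons, List.sum_cons, ih]
    ring

lemma CertL.mul_X_sub_C_sq {q : ℝ[X]} {r : ℝ} {kg kh d : ℕ} (h : CertL q kg kh d) :
    CertL ((X - C r)^2 * q) (kg+1) (kh+1) (d+2) := by
  obtain ⟨A, B, hA, hB, hsum⟩ := h
  have hdeg2 : ((X - C r)^2 : ℝ[X]).natDegree = 2 := by
    rw [natDegree_pow, natDegree_X_sub_C]
  refine ⟨A.map fun x => ((X - C r) * x.1, x.2), B.map fun x => ((X - C r) * x.1, x.2),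
    ?_, ?_, ?_⟩
  · intro x hx
    obtain ⟨y, hy, rfl⟩ := List.mem_map.mp hx
    obtain ⟨hy1, hy2, hy3⟩ := hA y hy
    refine ⟨?_, hy2, ?_⟩
    · calc ((X - C r) * y.1).natDegree ≤ (X - C r).natDegree + y.1.natDegree := natDegree_mul_le
      _ ≤ kg + 1 := by rw [natDegree_X_sub_C]; omega
    · have heq : ((X - C r) * y.1)^2 * y.2 = (X - C r)^2 * (y.1^2 * y.2) := by ring
      rw [heq]
      calc ((X - C r)^2 * (y.1^2 * y.2)).natDegree
          ≤ ((X - C r)^2 : ℝ[X]).natDegree + (y.1^2 * y.2).natDegree := natDegree_mul_le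
      _ ≤ d + 2 := by rw [hdeg2]; omega
  · intro x hx
    obtain ⟨y, hy, rfl⟩ := List.mem_map.mp hx
    obtain ⟨hy1, hy2, hy3⟩ := hB y hy
    refine ⟨?_, hy2, ?_⟩
    · calc ((X - C r) * y.1).natDegree ≤ (X - C r).natDegree + y.1.natDegree := natDegree_mul_le
      _ ≤ kh + 1 := by rw [natDegree_X_sub_C]; omega
    · have heq : (1 - X) * (((X - C r) * y.1)^2 * y.2) =
          (X - C r)^2 * ((1 - X) * (y.1^2 * y.2)) := by ring
      rw [heq]
      calc ((X - C r)^2 * ((1 - X) * (y.1^2 * y.2))).natDegree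
          ≤ ((X - C r)^2 : ℝ[X]).natDegree + ((1 - X) * (y.1^2 * y.2)).natDegree :=
            natDegree_mul_le
      _ ≤ d + 2 := by rw [hdeg2]; omega
  · have e1 : ((A.map fun x => ((X - C r) * x.1, x.2)).map fun x => x.1^2 * x.2) =
        A.map fun x => ((X - C r) * x.1)^2 * x.2 := by
      rw [List.map_map]; rfl
    have e2 : ((B.map fun x => ((X - C r) * x.1, x.2)).map fun x => x.1^2 * x.2) =
        B.map fun x => ((X - C r) * x.1)^2 * x.2 := by
      rw [List.map_map]; rfl
    rw [e1, e2, map_sq_mul, map_sq_mul, hsum]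
    ring

lemma CertL.mul_one_sub_X {r : ℝ[X]} {kg kh d : ℕ} (h : CertL r kg kh d) :
    CertL ((1 - X) * r) (kh+1) kg (d+1) := by
  obtain ⟨A, B, hA, hB, hsum⟩ := h
  refine ⟨B.map fun x => ((1 - X) * x.1, x.2), A, ?_, ?_, ?_⟩
  · intro x hx
    obtain ⟨y, hy, rfl⟩ := List.mem_map.mp hx
    obtain ⟨hy1, hy2, hy3⟩ := hB y hy
    refine ⟨?_, hy2, ?_⟩
    · calc ((1 - X) * y.1).natDegree ≤ (1 - X : ℝ[X]).natDegree + y.1.natDegree :=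
          natDegree_mul_le
      _ ≤ kh + 1 := by rw [natDegree_one_sub_X]; omega
    · have heq : ((1 - X) * y.1)^2 * y.2 = (1 - X) * ((1 - X) * (y.1^2 * y.2)) := by ring
      rw [heq]
      calc ((1 - X) * ((1 - X) * (y.1^2 * y.2))).natDegree
          ≤ (1 - X : ℝ[X]).natDegree + ((1 - X) * (y.1^2 * y.2)).natDegree := natDegree_mul_le
      _ ≤ d + 1 := by rw [natDegree_one_sub_X]; omega
  · intro x hx
    obtain ⟨hy1, hy2, hy3⟩ := hA x hx
    refine ⟨hy1, hy2, ?_⟩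
    calc ((1 - X) * (x.1^2 * x.2)).natDegree
        ≤ (1 - X : ℝ[X]).natDegree + (x.1^2 * x.2).natDegree := natDegree_mul_le
    _ ≤ d + 1 := by rw [natDegree_one_sub_X]; omega
  · have e2 : ((B.map fun x => ((1 - X) * x.1, x.2)).map fun x => x.1^2 * x.2) =
        B.map fun x => ((1 - X) * x.1)^2 * x.2 := by
      rw [List.map_map]; rfl
    rw [e2, map_sq_mul, hsum]
    ring

lemma CertL.mul_X_pow {q : ℝ[X]} {a kg kh d : ℕ} (h : CertL q kg kh d) :
    CertL (X^a * q) kg kh (d+a) := by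
  obtain ⟨A, B, hA, hB, hsum⟩ := h
  have hXa : (X^a : ℝ[X]).natDegree = a := natDegree_X_pow a
  have hXcoeff : ∀ pp : ℝ[X], (∀ c, 0 ≤ pp.coeff c) → ∀ c, 0 ≤ (X^a * pp).coeff c := by
    intro pp hpp c
    rw [mul_comm, coeff_mul_X_pow']
    split_ifs with hle
    · exact hpp _
    · exact le_refl 0
  refine ⟨A.map fun x => (x.1, X^a * x.2), B.map fun x => (x.1, X^a * x.2), ?_, ?_, ?_⟩
  · intro x hx
    obtain ⟨y, hy, rfl⟩ := List.mem_map.mp hx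
    obtain ⟨hy1, hy2, hy3⟩ := hA y hy
    refine ⟨hy1, hXcoeff _ hy2, ?_⟩
    have heq : y.1^2 * (X^a * y.2) = X^a * (y.1^2 * y.2) := by ring
    rw [heq]
    calc (X^a * (y.1^2 * y.2)).natDegree ≤ (X^a : ℝ[X]).natDegree + (y.1^2 * y.2).natDegree :=
        natDegree_mul_le
    _ ≤ d + a := by rw [hXa]; omega
  · intro x hx
    obtain ⟨y, hy, rfl⟩ := List.mem_map.mp hx
    obtain ⟨hy1, hy2, hy3⟩ := hB y hy
    refine ⟨hy1, hXcoeff _ hy2, ?_⟩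
    have heq : (1 - X) * (y.1^2 * (X^a * y.2)) = X^a * ((1 - X) * (y.1^2 * y.2)) := by ring
    rw [heq]
    calc (X^a * ((1 - X) * (y.1^2 * y.2))).natDegree
        ≤ (X^a : ℝ[X]).natDegree + ((1 - X) * (y.1^2 * y.2)).natDegree := natDegree_mul_le
    _ ≤ d + a := by rw [hXa]; omega
  · have e1 : ((A.map fun x => (x.1, X^a * x.2)).map fun x => x.1^2 * x.2) =
        A.map fun x => x.1^2 * (X^a * x.2) := by rw [List.map_map]; rfl
    have e2 : ((B.map fun x => (x.1, X^a * x.2)).map fun x => x.1^2 * x.2) =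
        B.map fun x => x.1^2 * (X^a * x.2) := by rw [List.map_map]; rfl
    rw [e1, e2, map_snd_mul, map_snd_mul, hsum]
    ring

lemma CertL.single_monomial {lam : ℝ} {a kg kh : ℕ} (hlam : 0 ≤ lam) :
    CertL (C lam * X^a) kg kh a := by
  apply CertL.of_nonneg_coeffs
  · intro c
    rw [coeff_C_mul, coeff_X_pow]
    split_ifs
    · simpa using hlam
    · simp
  · calc (C lam * X^a).natDegree ≤ (C lam).natDegree + (X^a : ℝ[X]).natDegree :=
        natDegree_mul_le
    _ ≤ a := by rw [natDegree_C, natDegree_X_pow]; omega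

/-! ### Analytic lemmas -/

lemma nonneg_left_endpoint {q : ℝ[X]} {a b : ℝ} (hab : a < b)
    (h : ∀ x ∈ Set.Ioc a b, 0 ≤ q.eval x) : 0 ≤ q.eval a := by
  have ht : Filter.Tendsto (fun x => q.eval x) (nhdsWithin a (Set.Ioi a)) (nhds (q.eval a)) :=
    ((q.continuous_aeval).tendsto a).mono_left nhdsWithin_le_nhds
  exact ge_of_tendsto ht (Filter.eventually_of_mem
    (Ioc_mem_nhdsGT_of_mem ⟨le_refl a, hab⟩) h)

lemma nonneg_right_endpoint {q : ℝ[X]} {a b : ℝ} (hab : a < b)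
    (h : ∀ x ∈ Set.Ico a b, 0 ≤ q.eval x) : 0 ≤ q.eval b := by
  have ht : Filter.Tendsto (fun x => q.eval x) (nhdsWithin b (Set.Iio b)) (nhds (q.eval b)) :=
    ((q.continuous_aeval).tendsto b).mono_left nhdsWithin_le_nhds
  exact ge_of_tendsto ht (Filter.eventually_of_mem
    (Ico_mem_nhdsLT_of_mem ⟨hab, le_refl b⟩) h)

lemma trailingCoeff_pos {p : ℝ[X]} (hp : p ≠ 0)
    (hpos : ∀ x ∈ Set.Icc (0:ℝ) 1, 0 ≤ p.eval x) :
    0 < p.coeff p.natTrailingDegree := by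
  set t := p.natTrailingDegree with hT
  obtain ⟨q, hq⟩ : X^t ∣ p := X_pow_dvd_iff.mpr (fun d hd =>
    coeff_eq_zero_of_lt_natTrailingDegree hd)
  have hct : p.coeff t = q.coeff 0 := by
    rw [hq, mul_comm, coeff_mul_X_pow']
    simp
  have hqn : ∀ x ∈ Set.Ioc (0:ℝ) 1, 0 ≤ q.eval x := by
    intro x hx
    have hpx := hpos x ⟨le_of_lt hx.1, hx.2⟩
    rw [hq] at hpx
    simp only [eval_mul, eval_pow, eval_X] at hpx
    have hxp : 0 < x^t := pow_pos hx.1 t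
    nlinarith
  have h0 : 0 ≤ q.eval 0 := nonneg_left_endpoint one_pos hqn
  have hne : p.coeff t ≠ 0 := coeff_natTrailingDegree_ne_zero.mpr hp
  rw [hct] at hne ⊢
  rw [coeff_zero_eq_eval_zero] at hne ⊢
  exact lt_of_le_of_ne h0 (Ne.symm hne)

lemma alt_one_of_neg_coeff {p : ℝ[X]} {j : ℕ} (hj : p.coeff j < 0)
    (hpos : ∀ x ∈ Set.Icc (0:ℝ) 1, 0 ≤ p.eval x) : Alt p 1 := by
  have hp : p ≠ 0 := fun h => by simp [h] at hj
  have htc := trailingCoeff_pos hp hpos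
  have hle : p.natTrailingDegree ≤ j := natTrailingDegree_le_of_ne_zero (ne_of_lt hj)
  have hne : p.natTrailingDegree ≠ j := by
    intro h
    rw [h] at htc
    linarith
  refine ⟨fun i => match i with | 0 => p.natTrailingDegree | (_+1) => j,
    fun i hi => ?_, fun i hi => ?_, fun i hi => ?_⟩
  · match i with
    | 0 => show p.natTrailingDegree < j; omega
  · match i with
    | 0 => exact ne_of_gt htc
    | (w+1) => exact ne_of_lt hj
  · match i with
    | 0 => show p.coeff j * p.coeff p.natTrailingDegree < 0; nlinarith

lemma exists_lambda {p : ℝ[X]} {a : ℕ} (ha : 1 ≤ a)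
    (h0 : 0 < p.eval 0) (hpos : ∀ x ∈ Set.Icc (0:ℝ) 1, 0 ≤ p.eval x) :
    ∃ lam x0 : ℝ, 0 ≤ lam ∧ x0 ∈ Set.Ioc (0:ℝ) 1 ∧ p.eval x0 = lam * x0^a ∧
      ∀ x ∈ Set.Icc (0:ℝ) 1, lam * x^a ≤ p.eval x := by
  set c := p.eval 1 with hc
  have hc0 : 0 ≤ c := hpos 1 ⟨zero_le_one, le_refl 1⟩
  -- near 0 the polynomial is at least p(0)/2
  have hcont : ContinuousAt (fun x => p.eval x) 0 := (p.continuous_aeval).continuousAt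
  obtain ⟨δ₁, hδ₁pos, hδ₁⟩ := Metric.continuousAt_iff.mp hcont (p.eval 0 / 2) (by positivity)
  set w := p.eval 0 / (2 * (c + 1)) with hw
  have hwpos : 0 < w := by
    rw [hw]
    positivity
  set δ := min (δ₁/2) (min 1 w) with hδ
  have hδpos : 0 < δ := by
    rw [hδ]
    positivity
  have hδ1 : δ ≤ 1 := le_trans (min_le_right _ _) (min_le_left _ _)
  have hδw : δ ≤ w := le_trans (min_le_right _ _) (min_le_right _ _)
  have hδδ₁ : δ < δ₁ := lt_of_le_of_lt (min_le_left _ _) (by linarith)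
  -- minimum of eval x p / x^a on [δ, 1]
  have hKne : (Set.Icc δ 1).Nonempty := ⟨δ, le_refl δ, hδ1⟩
  have hφcont : ContinuousOn (fun x => p.eval x / x^a) (Set.Icc δ 1) := by
    apply ContinuousOn.div
    · exact (p.continuous_aeval).continuousOn
    · exact (continuous_pow a).continuousOn
    · intro x hx
      exact pow_ne_zero a (ne_of_gt (lt_of_lt_of_le hδpos hx.1))
  obtain ⟨x0, hx0K, hx0min⟩ := isCompact_Icc.exists_isMinOn hKne hφcont
  have hx0pos : 0 < x0 := lt_of_lt_of_le hδpos hx0K.1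
  have hx0a : 0 < x0^a := pow_pos hx0pos a
  set lam := p.eval x0 / x0^a with hlam
  have hlamnn : 0 ≤ lam := div_nonneg (hpos x0 ⟨le_of_lt hx0pos, hx0K.2⟩) (le_of_lt hx0a)
  have hmin : ∀ x ∈ Set.Icc δ 1, lam ≤ p.eval x / x^a := fun x hx => hx0min hx
  have hlamc : lam ≤ c := by
    have := hmin 1 ⟨hδ1, le_refl 1⟩
    simpa [hc] using this
  refine ⟨lam, x0, hlamnn, ⟨hx0pos, hx0K.2⟩, by
    rw [hlam]
    field_simp, ?_⟩
  intro x hx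
  rcases eq_or_lt_of_le hx.1 with h00 | hxpos
  · rw [← h00, zero_pow (by omega : a ≠ 0), mul_zero]
    exact hpos 0 ⟨le_refl 0, zero_le_one⟩
  · rcases le_or_gt δ x with hcase | hcase
    · have := hmin x ⟨hcase, hx.2⟩
      rw [le_div_iff₀ (pow_pos hxpos a)] at this
      exact this
    · -- x < δ : p.eval x > p0/2 and lam * x^a small
      have hdist : dist x 0 < δ₁ := by
        rw [Real.dist_eq, sub_zero, abs_of_pos hxpos]
        linarith
      have hnear := hδ₁ hdist
      rw [Real.dist_eq] at hnear
      have hplarge : p.eval 0 / 2 < p.eval x := by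
        have := abs_sub_lt_iff.mp hnear
        linarith [this.1, this.2]
      have hxa_le : x^a ≤ x := pow_le_of_le_one (le_of_lt hxpos) (le_trans (le_of_lt hcase) hδ1)
        (by omega)
      have hxa_nn : 0 ≤ x^a := pow_nonneg (le_of_lt hxpos) a
      have hxw : x^a ≤ w := le_trans hxa_le (le_trans (le_of_lt hcase) hδw)
      have hkey : (c + 1) * w = p.eval 0 / 2 := by
        rw [hw]
        field_simp
      have h1 : lam * x^a ≤ c * w := by
        apply mul_le_mul hlamc hxw hxa_nn hc0
      have h2 : c * w ≤ (c + 1) * w := by nlinarith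
      linarith

lemma sq_dvd_of_interior_root {p : ℝ[X]} {x0 : ℝ} (hx0 : x0 ∈ Set.Ioo (0:ℝ) 1)
    (hpos : ∀ x ∈ Set.Icc (0:ℝ) 1, 0 ≤ p.eval x) (hroot : p.eval x0 = 0) :
    ∃ q, p = (X - C x0)^2 * q := by
  have hmin : IsLocalMin (fun x => p.eval x) x0 := by
    apply Filter.eventually_of_mem (Icc_mem_nhds hx0.1 hx0.2)
    intro y hy
    show p.eval x0 ≤ p.eval y
    rw [hroot]
    exact hpos y hy
  have hder := hmin.deriv_eq_zero
  rw [Polynomial.deriv] at hder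
  obtain ⟨q1, hq1⟩ := dvd_iff_isRoot.mpr (show p.IsRoot x0 from hroot)
  have hq1root : q1.eval x0 = 0 := by
    have : p.derivative = q1 + (X - C x0) * q1.derivative := by
      rw [hq1, derivative_mul, derivative_X_sub_C]
      ring
    rw [this] at hder
    simpa using hder
  obtain ⟨q, hq⟩ := dvd_iff_isRoot.mpr (show q1.IsRoot x0 from hq1root)
  exact ⟨q, by rw [hq1, hq]; ring⟩

lemma quot_nonneg_interior {q : ℝ[X]} {x0 : ℝ} (hx0 : x0 ∈ Set.Ioo (0:ℝ) 1)
    (h : ∀ x ∈ Set.Icc (0:ℝ) 1, 0 ≤ ((X - C x0)^2 * q).eval x) :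
    ∀ x ∈ Set.Icc (0:ℝ) 1, 0 ≤ q.eval x := by
  have hoff : ∀ x ∈ Set.Icc (0:ℝ) 1, x ≠ x0 → 0 ≤ q.eval x := by
    intro x hx hne
    have hpx := h x hx
    simp only [eval_mul, eval_pow, eval_sub, eval_X, eval_C] at hpx
    have h2 : 0 < (x - x0)^2 := by
      have hnz : x - x0 ≠ 0 := sub_ne_zero.mpr hne
      exact lt_of_le_of_ne (sq_nonneg _) (Ne.symm (pow_ne_zero 2 hnz))
    nlinarith
  intro x hx
  by_cases hne : x = x0
  · subst hne
    apply nonneg_left_endpoint hx0.2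
    intro y hy
    exact hoff y ⟨le_trans (le_of_lt hx0.1) (le_of_lt hy.1), hy.2⟩ (ne_of_gt hy.1)
  · exact hoff x hx hne

lemma quot_nonneg_boundary {r : ℝ[X]}
    (h : ∀ x ∈ Set.Icc (0:ℝ) 1, 0 ≤ ((1 - X) * r).eval x) :
    ∀ x ∈ Set.Icc (0:ℝ) 1, 0 ≤ r.eval x := by
  have hoff : ∀ x ∈ Set.Ico (0:ℝ) 1, 0 ≤ r.eval x := by
    intro x hx
    have hpx := h x ⟨hx.1, le_of_lt hx.2⟩
    simp only [eval_mul, eval_sub, eval_one, eval_X] at hpx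
    have h2 : 0 < 1 - x := by linarith [hx.2]
    nlinarith
  intro x hx
  rcases eq_or_lt_of_le hx.2 with h1 | h1
  · rw [h1]
    exact nonneg_right_endpoint one_pos hoff
  · exact hoff x ⟨hx.1, h1⟩

lemma alt_mul_X_pow {p : ℝ[X]} {a n : ℕ} (h : Alt p n) : Alt (X ^ a * p) n := by
  obtain ⟨e, h1, h2, h3⟩ := h
  have key : ∀ i, (X ^ a * p).coeff (e i + a) = p.coeff (e i) := by
    intro i
    rw [mul_comm, coeff_mul_X_pow]
  refine ⟨fun i => e i + a, fun i hi => ?_, fun i hi => ?_, fun i hi => ?_⟩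
  · show e i + a < e (i+1) + a
    have := h1 i hi
    omega
  · show (X ^ a * p).coeff (e i + a) ≠ (0:ℝ)
    rw [key i]
    exact h2 i hi
  · show (X ^ a * p).coeff (e (i+1) + a) * (X ^ a * p).coeff (e i + a) < (0:ℝ)
    rw [key i, key (i+1)]
    exact h3 i hi

lemma factor_nonneg {p q : ℝ[X]} {t : ℕ} (hq : p = X^t * q)
    (hpos : ∀ x ∈ Set.Icc (0:ℝ) 1, 0 ≤ p.eval x) :
    ∀ x ∈ Set.Icc (0:ℝ) 1, 0 ≤ q.eval x := by
  have hqn : ∀ x ∈ Set.Ioc (0:ℝ) 1, 0 ≤ q.eval x := by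
    intro x hx
    have hpx := hpos x ⟨le_of_lt hx.1, hx.2⟩
    rw [hq] at hpx
    simp only [eval_mul, eval_pow, eval_X] at hpx
    have hxp : 0 < x^t := pow_pos hx.1 t
    nlinarith
  intro x hx
  rcases eq_or_lt_of_le hx.1 with h00 | h00
  · rw [← h00]
    exact nonneg_left_endpoint one_pos hqn
  · exact hqn x ⟨h00, hx.2⟩

/-- Main induction: a polynomial nonnegative on `[0,1]` whose alternating chains are bounded
by `V` admits a certificate with square degrees `V/2` and `(V-1)/2`. -/
lemma key : ∀ D : ℕ, ∀ p : ℝ[X], p.natDegree ≤ D →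
    (∀ x ∈ Set.Icc (0:ℝ) 1, 0 ≤ p.eval x) →
    ∀ V : ℕ, (∀ n, Alt p n → n ≤ V) →
    CertL p (V/2) ((V-1)/2) p.natDegree := by
  intro D
  induction D with
  | zero =>
    intro p hD hpos V hV
    apply CertL.of_nonneg_coeffs _ (le_refl _)
    intro cc
    rcases Nat.eq_zero_or_pos cc with rfl | hcc
    · rw [coeff_zero_eq_eval_zero]
      exact hpos 0 ⟨le_refl 0, zero_le_one⟩
    · rw [coeff_eq_zero_of_natDegree_lt (by omega)]
  | succ D ih =>
    intro p hD hpos V hV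
    by_cases hnn : ∀ cc, 0 ≤ p.coeff cc
    · exact CertL.of_nonneg_coeffs hnn (le_refl _)
    push_neg at hnn
    obtain ⟨jneg, hjneg⟩ := hnn
    have hjneg' : p.coeff jneg < 0 := not_le.mp (not_le_of_gt hjneg)
    have hp0 : p ≠ 0 := fun h => by simp [h] at hjneg'
    by_cases hc0 : p.coeff 0 = 0
    · -- factor out a power of X
      set t := p.natTrailingDegree with hT
      have ht1 : 1 ≤ t := by
        by_contra hcon
        push_neg at hcon
        interval_cases t
        · exact coeff_natTrailingDegree_ne_zero.mpr hp0 (by rw [← hT]; exact hc0)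
      obtain ⟨q, hq⟩ : X^t ∣ p := X_pow_dvd_iff.mpr (fun d hd =>
        coeff_eq_zero_of_lt_natTrailingDegree hd)
      have hq0 : q ≠ 0 := fun h => hp0 (by rw [hq, h, mul_zero])
      have hdeg : p.natDegree = t + q.natDegree := by
        rw [hq, natDegree_mul (pow_ne_zero t X_ne_zero) hq0, natDegree_X_pow]
      have hqD : q.natDegree ≤ D := by omega
      have hqpos := factor_nonneg hq hpos
      have hqV : ∀ n, Alt q n → n ≤ V := fun n hn => hV n (by rw [hq]; exact alt_mul_X_pow hn)
      have hcq := ih q hqD hqpos V hqV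
      have := hcq.mul_X_pow (a := t)
      rw [← hq] at this
      exact this.mono (le_refl _) (le_refl _) (by omega)
    · -- p(0) > 0
      have h0 : 0 < p.eval 0 := by
        rw [← coeff_zero_eq_eval_zero]
        exact lt_of_le_of_ne (by rw [coeff_zero_eq_eval_zero]; exact hpos 0 ⟨le_refl 0, zero_le_one⟩)
          (Ne.symm hc0)
      have hj1 : 1 ≤ jneg := by
        rcases Nat.eq_zero_or_pos jneg with rfl | h
        · rw [coeff_zero_eq_eval_zero] at hjneg'; linarith
        · omega
      obtain ⟨lam, x0, hlamnn, hx0, hevalx0, hbound⟩ := exists_lambda hj1 h0 hpos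
      set p' := p - C lam * X^jneg with hp'
      have hap : jneg ≤ p.natDegree := le_natDegree_of_ne_zero (ne_of_lt hjneg')
      have hp'coeff : ∀ cc, p'.coeff cc = p.coeff cc - (if jneg = cc then lam else 0) := by
        intro cc
        rw [hp', coeff_sub, coeff_C_mul, coeff_X_pow]
        split_ifs with h1 h2
        · ring
        · exact absurd h1.symm h2
        · next h2 => exact absurd h2.symm h1
        · ring
      have hp'neg : p'.coeff jneg < 0 := by
        rw [hp'coeff, if_pos rfl]
        linarith
      have hp'0 : p' ≠ 0 := fun h => by rw [h] at hp'neg; simp at hp'neg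
      have hp'pos : ∀ x ∈ Set.Icc (0:ℝ) 1, 0 ≤ p'.eval x := by
        intro x hx
        have := hbound x hx
        rw [hp']
        simp only [eval_sub, eval_mul, eval_C, eval_pow, eval_X]
        linarith
      have hp'deg : p'.natDegree ≤ p.natDegree := by
        apply le_trans (natDegree_sub_le _ _)
        apply max_le (le_refl _)
        calc (C lam * X^jneg).natDegree ≤ (C lam).natDegree + (X^jneg : ℝ[X]).natDegree :=
            natDegree_mul_le
        _ ≤ p.natDegree := by rw [natDegree_C, natDegree_X_pow]; omega
      have hsame : ∀ i, (0 < p'.coeff i ↔ 0 < p.coeff i) ∧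
          (p'.coeff i < 0 ↔ p.coeff i < 0) := by
        intro i
        rw [hp'coeff i]
        by_cases hij : jneg = i
        · subst hij
          rw [if_pos rfl]
          exact ⟨iff_of_false (by linarith) (by linarith),
            iff_of_true (by linarith) (by linarith)⟩
        · rw [if_neg hij, sub_zero]
          exact ⟨Iff.rfl, Iff.rfl⟩
      have htransfer : ∀ n, Alt p' n → Alt p n := fun n hn => alt_congr_signs hsame hn
      have hx0root : p'.eval x0 = 0 := by
        rw [hp']
        simp only [eval_sub, eval_mul, eval_C, eval_pow, eval_X]
        rw [hevalx0]
        ring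
      have hsplit : p = p' + C lam * X^jneg := by rw [hp']; ring
      have hmono_cert : CertL p' (V/2) ((V-1)/2) p.natDegree →
          CertL p (V/2) ((V-1)/2) p.natDegree := by
        intro hcp'
        have h := hcp'.add ((CertL.single_monomial hlamnn).mono (le_refl _) (le_refl _) hap)
        rwa [← hsplit] at h
      apply hmono_cert
      rcases eq_or_lt_of_le hx0.2 with hx01 | hx01
      · -- boundary root at 1
        have hroot1 : p'.IsRoot 1 := by
          show p'.eval 1 = 0
          rw [← hx01]
          exact hx0root
        obtain ⟨s, hs⟩ := dvd_iff_isRoot.mpr hroot1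
        set r := -s with hrdef
        have hp'r : p' = (1 - X) * r := by rw [hs, hrdef, C_1]; ring
        have honesub : (1 - X : ℝ[X]) ≠ 0 := fun h => by
          have h1 := natDegree_one_sub_X
          rw [h, natDegree_zero] at h1
          exact absurd h1 (by omega)
        have hr0 : r ≠ 0 := fun h => hp'0 (by rw [hp'r, h, mul_zero])
        have hrpos := quot_nonneg_boundary (r := r) (by rw [← hp'r]; exact hp'pos)
        have hdegr : p'.natDegree = r.natDegree + 1 := by
          rw [hp'r, natDegree_mul honesub hr0, natDegree_one_sub_X]
          omega
        have hlift : ∀ n, Alt r n → Alt p' (n+1) := by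
          intro n hn
          have h1 : Alt ((X - C 1) * r) (n+1) := alt_mul_X_sub_C hr0 one_pos hn
          have heq : p' = -((X - C 1) * r) := by rw [hp'r, C_1]; ring
          rw [heq]
          exact alt_neg h1
        by_cases hrnn : ∀ cc, 0 ≤ r.coeff cc
        · rw [hp'r]
          exact (CertL.one_sub_X_mul hrnn (by simp) (le_refl _)).mono (le_refl _) (le_refl _)
            (by omega)
        · push_neg at hrnn
          obtain ⟨jr, hjr⟩ := hrnn
          have hAltr1 : Alt r 1 := alt_one_of_neg_coeff (not_le.mp (not_le_of_gt hjr)) hrpos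
          have hV2 : 2 ≤ V := hV 2 (htransfer 2 (hlift 1 hAltr1))
          have hrV : ∀ n, Alt r n → n ≤ V - 1 := by
            intro n hn
            have := hV (n+1) (htransfer (n+1) (hlift n hn))
            omega
          have hrD : r.natDegree ≤ D := by omega
          have hcr := ih r hrD hrpos (V-1) hrV
          have hfin := hcr.mul_one_sub_X
          rw [← hp'r] at hfin
          exact hfin.mono (by omega) (by omega) (by omega)
      · -- interior root
        have hx0I : x0 ∈ Set.Ioo (0:ℝ) 1 := ⟨hx0.1, hx01⟩
        obtain ⟨q, hq⟩ := sq_dvd_of_interior_root hx0I hp'pos hx0root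
        have hXx0 : (X - C x0 : ℝ[X]) ≠ 0 := X_sub_C_ne_zero x0
        have hq0 : q ≠ 0 := fun h => hp'0 (by rw [hq, h, mul_zero])
        have hqpos := quot_nonneg_interior hx0I (by rw [← hq]; exact hp'pos)
        have hdegq : p'.natDegree = q.natDegree + 2 := by
          rw [hq, natDegree_mul (pow_ne_zero 2 hXx0) hq0, natDegree_pow, natDegree_X_sub_C]
          omega
        have hlift : ∀ n, Alt q n → Alt p' (n+2) := by
          intro n hn
          have h1 : Alt ((X - C x0) * q) (n+1) := alt_mul_X_sub_C hq0 hx0.1 hn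
          have h2 : Alt ((X - C x0) * ((X - C x0) * q)) (n+2) :=
            alt_mul_X_sub_C (mul_ne_zero hXx0 hq0) hx0.1 h1
          have heq : (X - C x0) * ((X - C x0) * q) = (X - C x0)^2 * q := by ring
          rw [heq] at h2
          rw [hq]
          exact h2
        have hV2 : 2 ≤ V := hV 2 (htransfer 2 (hlift 0 (alt_zero hq0)))
        by_cases hqnn : ∀ cc, 0 ≤ q.coeff cc
        · rw [hq]
          apply (CertL.single_sq (kg := V/2) (kh := (V-1)/2) (d := p'.natDegree) ?_ hqnn ?_).mono
            (le_refl _) (le_refl _) (by omega)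
          · rw [natDegree_X_sub_C]
            omega
          · rw [← hq]
        · push_neg at hqnn
          obtain ⟨jq, hjq⟩ := hqnn
          have hAltq1 : Alt q 1 := alt_one_of_neg_coeff (not_le.mp (not_le_of_gt hjq)) hqpos
          have hV3 : 3 ≤ V := hV 3 (htransfer 3 (hlift 1 hAltq1))
          have hqV : ∀ n, Alt q n → n ≤ V - 2 := by
            intro n hn
            have := hV (n+2) (htransfer (n+2) (hlift n hn))
            omega
          have hqD : q.natDegree ≤ D := by omega
          have hcq := ih q hqD hqpos (V-2) hqV
          have hfin := hcq.mul_X_sub_C_sq (r := x0)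
          rw [← hq] at hfin
          exact hfin.mono (by omega) (by omega) (by omega)

lemma sum_fin_map (A : List (ℝ[X] × ℝ[X])) (f : ℝ[X] × ℝ[X] → ℝ[X]) :
    ∑ i : Fin A.length, f (A.get i) = (A.map f).sum := by
  induction A with
  | nil => simp
  | cons a t ih =>
    simp only [List.map_cons, List.sum_cons, ← ih, List.length_cons, Fin.sum_univ_succ]
    rfl

end SparseCert

theorem stmt_1 (k d : ℕ) (p : ℝ[X]) (hdeg : p.natDegree = d)
    (hsupp : p.support.card ≤ 2 * k + 1)
    (hpos : ∀ x ∈ Set.Icc (0 : ℝ) 1, 0 ≤ p.eval x) :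
    ∃ (M N : ℕ) (g pp : Fin M → ℝ[X]) (h q : Fin N → ℝ[X]),
      (∀ i, (g i).natDegree ≤ k) ∧
      (∀ j, (h j).natDegree ≤ k) ∧
      (∀ i, ∀ c, 0 ≤ (pp i).coeff c) ∧
      (∀ j, ∀ c, 0 ≤ (q j).coeff c) ∧
      (∀ i, (g i ^ 2 * pp i).natDegree ≤ d) ∧
      (∀ j, ((1 - X) * (h j ^ 2 * q j)).natDegree ≤ d) ∧
      p = (∑ i, g i ^ 2 * pp i) + (1 - X) * ∑ j, h j ^ 2 * q j := by
  subst hdeg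
  have hVbound : ∀ n, SparseCert.Alt p n → n ≤ 2*k := by
    intro n hn
    have := hn.card_le
    omega
  have hcert := SparseCert.key p.natDegree p (le_refl _) hpos (2*k) hVbound
  have hcert2 : SparseCert.CertL p k k p.natDegree :=
    hcert.mono (by omega) (by omega) (le_refl _)
  obtain ⟨A, B, hA, hB, hsum⟩ := hcert2
  refine ⟨A.length, B.length, fun i => (A.get i).1, fun i => (A.get i).2,
    fun j => (B.get j).1, fun j => (B.get j).2,
    fun i => (hA _ (A.get_mem i)).1,
    fun j => (hB _ (B.get_mem j)).1,
    fun i => (hA _ (A.get_mem i)).2.1,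
    fun j => (hB _ (B.get_mem j)).2.1,
    fun i => (hA _ (A.get_mem i)).2.2,
    fun j => (hB _ (B.get_mem j)).2.2, ?_⟩
  rw [hsum, SparseCert.sum_fin_map A (fun x => x.1^2 * x.2),
    SparseCert.sum_fin_map B (fun x => x.1^2 * x.2)]
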